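/- If σ is a SIF permutation of [n] with n ≥ 2, and σ' is obtained from σ by deleting n from its cycle, then σ' does not stabilize any proper nonempty initial or terminal subinterval of [n-1]; i.e., any proper subinterval of [n-1] stabilized by σ' is an interior interval [a,b] with 2 ≤ a ≤ b ≤ n-2. -/

import Mathlib

def Stab {n : ℕ} (σ : Equiv.Perm (Fin n)) (S : Finset (Fin n)) : Prop :=
  S.image σ = S

def SIF {n : ℕ} (σ : Equiv.Perm (Fin n)) : Prop :=
  ∀ a b : Fin n, (Finset.Icc a b).Nonempty → Finset.Icc a b ≠ Finset.univ →
    ¬ Stab σ (Finset.Icc a b)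

/-- `σ'` is obtained from `σ` (a permutation of `[n]`, modeled as `Fin (n+1)`) by deleting the
largest element `n` from its cycle. -/
def DeleteTop {n : ℕ} (σ : Equiv.Perm (Fin (n + 1))) (σ' : Equiv.Perm (Fin n)) : Prop :=
  ∀ j : Fin n, (σ' j : ℕ) =
    if σ (Fin.castSucc j) = Fin.last n then (σ (Fin.last n) : ℕ) else (σ (Fin.castSucc j) : ℕ)

lemma stab_of_maps {m : ℕ} (σ : Equiv.Perm (Fin m)) (S : Finset (Fin m))
    (h : ∀ x ∈ S, σ x ∈ S) : Stab σ S := by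
  apply Finset.eq_of_subset_of_card_le
  · intro y hy
    obtain ⟨x, hx, rfl⟩ := Finset.mem_image.mp hy
    exact h x hx
  · rw [Finset.card_image_of_injective _ σ.injective]

lemma mem_of_stab {m : ℕ} {σ : Equiv.Perm (Fin m)} {S : Finset (Fin m)}
    (h : Stab σ S) {j : Fin m} (hj : j ∈ S) : σ j ∈ S := by
  rw [← h]; exact Finset.mem_image_of_mem _ hj

lemma mem_of_stab' {m : ℕ} {σ : Equiv.Perm (Fin m)} {S : Finset (Fin m)}
    (h : Stab σ S) {j : Fin m} (hj : σ j ∈ S) : j ∈ S := by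
  rw [← h] at hj
  obtain ⟨i, hi, hij⟩ := Finset.mem_image.mp hj
  rwa [← σ.injective hij]

/-- If `σ` is SIF on `[n]` (modeled as `Fin (n+1)`, `n ≥ 1`, so the ambient size is at least
`2`) and `σ'` is obtained by deleting the largest element from its cycle, then every proper
nonempty subinterval `[a,b]` of `[n-1]` stabilized by `σ'` is an interior interval:
`2 ≤ a` and `b ≤ (n-1) - 1` in 1-indexed terms, i.e. `1 ≤ a` and `b ≤ n - 2` for
`a b : Fin n` (0-indexed). -/
theorem stmt16 (n : ℕ) (hn : 1 ≤ n) (σ : Equiv.Perm (Fin (n + 1))) (hσ : SIF σ)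
    (σ' : Equiv.Perm (Fin n)) (hdel : DeleteTop σ σ') :
    ∀ a b : Fin n, (Finset.Icc a b).Nonempty → Finset.Icc a b ≠ Finset.univ →
      Stab σ' (Finset.Icc a b) → 1 ≤ (a : ℕ) ∧ (b : ℕ) ≤ n - 2 := by
  obtain ⟨m, rfl⟩ : ∃ m, n = m + 1 := ⟨n - 1, by omega⟩
  intro a b hne hne' hstab
  have hab : (a : ℕ) ≤ (b : ℕ) := by
    obtain ⟨x, hx⟩ := hne
    rw [Finset.mem_Icc] at hx
    exact le_trans (Fin.le_def.mp hx.1) (Fin.le_def.mp hx.2)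
  have hbm : (b : ℕ) < m + 1 := b.isLt
  -- membership in Icc in terms of naturals
  have hmemIcc : ∀ j : Fin (m+1), j ∈ Finset.Icc a b ↔ ((a:ℕ) ≤ j ∧ (j:ℕ) ≤ b) := by
    intro j
    rw [Finset.mem_Icc, Fin.le_def, Fin.le_def]
  -- Claim A : a ≠ 0
  have claimA : (a : ℕ) ≠ 0 := by
    intro ha0
    have hblt : (b : ℕ) < m := by
      by_contra hb
      have hbm' : (b : ℕ) = m := by omega
      apply hne'
      apply Finset.eq_univ_iff_forall.mpr
      intro x
      rw [hmemIcc]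
      have := x.isLt
      omega
    by_cases hex : ∃ j ∈ Finset.Icc a b, σ j.castSucc = Fin.last (m+1)
    · -- σ stabilizes the interval [b+1, m] in Fin (m+2)
      obtain ⟨j₀, hj₀, hσj₀⟩ := hex
      have hj₀' := (hmemIcc j₀).mp hj₀
      refine hσ ⟨(b:ℕ)+1, by omega⟩ ⟨m, by omega⟩ ?_ ?_ (stab_of_maps _ _ ?_)
      · exact ⟨⟨m, by omega⟩, Finset.mem_Icc.mpr ⟨by simp [Fin.le_def]; omega, le_refl _⟩⟩
      · intro h
        have h0 : (0 : Fin (m+2)) ∈ Finset.Icc (⟨(b:ℕ)+1, by omega⟩ : Fin (m+2)) ⟨m, by omega⟩ :=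
          h ▸ Finset.mem_univ _
        rw [Finset.mem_Icc] at h0
        have := Fin.le_def.mp h0.1
        simp at this
      · intro x hx
        rw [Finset.mem_Icc] at hx
        have hx1 : (b:ℕ) + 1 ≤ (x:ℕ) := Fin.le_def.mp hx.1
        have hx2 : (x:ℕ) ≤ m := Fin.le_def.mp hx.2
        set j : Fin (m+1) := ⟨(x:ℕ), by omega⟩ with hj
        have hxj : x = j.castSucc := Fin.ext rfl
        have hnelast : σ x ≠ Fin.last (m+1) := by
          intro h
          have := σ.injective (h.trans hσj₀.symm)
          rw [hxj] at this
          have := congrArg Fin.val this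
          simp [hj] at this
          omega
        have hval : ((σ' j : ℕ)) = ((σ x : ℕ)) := by
          rw [hdel j, ← hxj, if_neg hnelast]
        have hjnot : j ∉ Finset.Icc a b := by
          rw [hmemIcc]
          simp [hj]
          omega
        have hσ'jnot : σ' j ∉ Finset.Icc a b := fun h => hjnot (mem_of_stab' hstab h)
        rw [hmemIcc] at hσ'jnot
        have hgt : (b:ℕ) < (σ' j : ℕ) := by omega
        have hle : (σ x : ℕ) ≤ m := by
          have h1 : (σ x : ℕ) < m + 2 := (σ x).isLt
          have h2 : (σ x : ℕ) ≠ m + 1 := fun h => hnelast (Fin.ext h)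
          omega
        rw [Finset.mem_Icc]
        constructor <;> rw [Fin.le_def] <;> simp <;> omega
    · -- σ stabilizes the interval [0, b] in Fin (m+2)
      push_neg at hex
      refine hσ 0 (b.castSucc) ?_ ?_ (stab_of_maps _ _ ?_)
      · exact ⟨0, Finset.mem_Icc.mpr ⟨le_refl _, Fin.le_def.mpr (by simp)⟩⟩
      · intro h
        have h0 : Fin.last (m+1) ∈ Finset.Icc (0 : Fin (m+2)) b.castSucc :=
          h ▸ Finset.mem_univ _
        rw [Finset.mem_Icc] at h0
        have := Fin.le_def.mp h0.2
        simp at this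
        omega
      · intro x hx
        rw [Finset.mem_Icc] at hx
        have hx2 : (x:ℕ) ≤ (b:ℕ) := Fin.le_def.mp hx.2
        set j : Fin (m+1) := ⟨(x:ℕ), by omega⟩ with hj
        have hxj : x = j.castSucc := Fin.ext rfl
        have hjmem : j ∈ Finset.Icc a b := by
          rw [hmemIcc]; simp [hj]; omega
        have hnelast : σ x ≠ Fin.last (m+1) := by
          rw [hxj]; exact hex j hjmem
        have hval : ((σ' j : ℕ)) = ((σ x : ℕ)) := by
          rw [hdel j, ← hxj, if_neg hnelast]
        have hσ'j := (hmemIcc _).mp (mem_of_stab hstab hjmem)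
        rw [Finset.mem_Icc]
        refine ⟨Fin.zero_le _, ?_⟩
        rw [Fin.le_def]
        simp
        omega
  -- Claim B : b ≠ m
  have claimB : (b : ℕ) ≠ m := by
    intro hb0
    have halt : 1 ≤ (a : ℕ) := by
      by_contra ha
      have ha' : (a : ℕ) = 0 := by omega
      exact claimA ha'
    by_cases hex : ∃ j ∈ Finset.Icc a b, σ j.castSucc = Fin.last (m+1)
    · -- σ stabilizes the interval [a, m+1] in Fin (m+2)
      obtain ⟨j₀, hj₀, hσj₀⟩ := hex
      have hj₀' := (hmemIcc j₀).mp hj₀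
      refine hσ a.castSucc (Fin.last (m+1)) ?_ ?_ (stab_of_maps _ _ ?_)
      · exact ⟨Fin.last (m+1), Finset.mem_Icc.mpr ⟨Fin.le_last _, le_refl _⟩⟩
      · intro h
        have h0 : (0 : Fin (m+2)) ∈ Finset.Icc a.castSucc (Fin.last (m+1)) :=
          h ▸ Finset.mem_univ _
        rw [Finset.mem_Icc] at h0
        have := Fin.le_def.mp h0.1
        simp only [Fin.coe_castSucc, Fin.val_zero] at this
        omega
      · intro x hx
        rw [Finset.mem_Icc] at hx
        have hx1 : (a:ℕ) ≤ (x:ℕ) := Fin.le_def.mp hx.1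
        rw [Finset.mem_Icc]
        refine ⟨?_, Fin.le_last _⟩
        rw [Fin.le_def]
        simp only [Fin.coe_castSucc]
        by_cases hxl : x = Fin.last (m+1)
        · -- σ (last) : use j₀
          have hval : ((σ' j₀ : ℕ)) = ((σ x : ℕ)) := by
            rw [hdel j₀, if_pos hσj₀, hxl]
          have hσ'j := (hmemIcc _).mp (mem_of_stab hstab hj₀)
          omega
        · have hxlt : (x:ℕ) ≤ m := by
            have h1 := x.isLt
            have h2 : (x:ℕ) ≠ m + 1 := fun h => hxl (Fin.ext h)
            omega
          set j : Fin (m+1) := ⟨(x:ℕ), by omega⟩ with hj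
          have hxj : x = j.castSucc := Fin.ext rfl
          have hjmem : j ∈ Finset.Icc a b := by
            rw [hmemIcc]; simp [hj]; omega
          by_cases hnelast : σ x = Fin.last (m+1)
          · rw [hnelast]; simp [Fin.last]
          · have hval : ((σ' j : ℕ)) = ((σ x : ℕ)) := by
              rw [hdel j, ← hxj, if_neg hnelast]
            have hσ'j := (hmemIcc _).mp (mem_of_stab hstab hjmem)
            omega
    · -- σ stabilizes the interval [a, m] in Fin (m+2)
      push_neg at hex
      refine hσ a.castSucc ⟨m, by omega⟩ ?_ ?_ (stab_of_maps _ _ ?_)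
      · refine ⟨⟨m, by omega⟩, Finset.mem_Icc.mpr ⟨?_, le_refl _⟩⟩
        rw [Fin.le_def]; simp; omega
      · intro h
        have h0 : (0 : Fin (m+2)) ∈ Finset.Icc a.castSucc ⟨m, by omega⟩ :=
          h ▸ Finset.mem_univ _
        rw [Finset.mem_Icc] at h0
        have := Fin.le_def.mp h0.1
        simp only [Fin.coe_castSucc, Fin.val_zero] at this
        omega
      · intro x hx
        rw [Finset.mem_Icc] at hx
        have hx1 : (a:ℕ) ≤ (x:ℕ) := Fin.le_def.mp hx.1
        have hx2 : (x:ℕ) ≤ m := Fin.le_def.mp hx.2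
        set j : Fin (m+1) := ⟨(x:ℕ), by omega⟩ with hj
        have hxj : x = j.castSucc := Fin.ext rfl
        have hjmem : j ∈ Finset.Icc a b := by
          rw [hmemIcc]; simp [hj]; omega
        have hnelast : σ x ≠ Fin.last (m+1) := by
          rw [hxj]; exact hex j hjmem
        have hval : ((σ' j : ℕ)) = ((σ x : ℕ)) := by
          rw [hdel j, ← hxj, if_neg hnelast]
        have hσ'j := (hmemIcc _).mp (mem_of_stab hstab hjmem)
        have hle : (σ x : ℕ) ≤ m := by
          have h1 : (σ x : ℕ) < m + 2 := (σ x).isLt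
          have h2 : (σ x : ℕ) ≠ m + 1 := fun h => hnelast (Fin.ext h)
          omega
        rw [Finset.mem_Icc]
        constructor <;> rw [Fin.le_def] <;> simp <;> omega
  exact ⟨by omega, by omega⟩
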